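/- For each n ≥ 1 and each transitive frame F = ⟨W,R⟩ with w ∈ W: F, w ⊨ Wid_n^• iff every irreflexive antichain A in the subframe of F generated by w satisfies |A| ≤ n. -/

import Mathlib

/-- A Kripke frame: a set of worlds with a binary relation. -/
structure Frame where
  World : Type
  rel : World → World → Prop

/-- `f` is a reduction (surjective p-morphism) of `F` to `G`. -/
def Reduction (F G : Frame) (f : F.World → G.World) : Prop :=
  Function.Surjective f ∧
  (∀ w u, F.rel w u → G.rel (f w) (f u)) ∧
  (∀ w v, G.rel (f w) v → ∃ u, F.rel w u ∧ f u = v)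

/-- `F` is reducible to `G`. -/
def Reducible (F G : Frame) : Prop := ∃ f, Reduction F G f

/-- The subframe of `F` generated by the point `w`. -/
def Frame.genSub (F : Frame) (w : F.World) : Frame :=
  ⟨{v // Relation.ReflTransGen F.rel w v}, fun a b => F.rel a.1 b.1⟩

/-- Modal formulas over countably many propositional variables. -/
inductive Formula where
  | var : ℕ → Formula
  | bot : Formula
  | imp : Formula → Formula → Formula
  | box : Formula → Formula
deriving DecidableEq

namespace Formula

def neg (a : Formula) : Formula := .imp a .bot
def top : Formula := .imp .bot .bot
def and (a b : Formula) : Formula := neg (.imp a (neg b))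
def or (a b : Formula) : Formula := .imp (neg a) b
def dia (a : Formula) : Formula := neg (.box (neg a))

/-- Finite conjunction of a list of formulas. -/
def bigConj (l : List Formula) : Formula := l.foldr and top

/-- Finite disjunction of a list of formulas. -/
def bigDisj (l : List Formula) : Formula := l.foldr or .bot

end Formula

/-- Kripke satisfaction of a formula at a world of `F` under valuation `V`. -/
def Sat (F : Frame) (V : ℕ → F.World → Prop) : F.World → Formula → Prop
  | w, .var n => V n w
  | _, .bot => False
  | w, .imp a b => Sat F V w a → Sat F V w b
  | w, .box a => ∀ u, F.rel w u → Sat F V u a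

/-- `φ` is valid at the point `w` of `F` (true under all valuations). -/
def SatAll (F : Frame) (w : F.World) (φ : Formula) : Prop := ∀ V, Sat F V w φ

/-- `φ` is valid in the frame `F`. -/
def Valid (F : Frame) (φ : Formula) : Prop := ∀ V w, Sat F V w φ

/-- The formula `Wid_n^•`, with `p_i` encoded as variable `i`:
`⋀_{i≤n} ◇(p_i ∧ □¬p_i) → ⋁_{0 ≤ i ≠ j ≤ n} ◇(p_i ∧ (p_j ∨ ◇p_j))`. -/
def widBul (n : ℕ) : Formula :=
  .imp
    (Formula.bigConj ((List.finRange (n + 1)).map fun i =>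
      Formula.dia (.and (.var i) (.box (Formula.neg (.var i))))))
    (Formula.bigDisj ((List.finRange (n + 1)).flatMap fun i =>
      (List.finRange (n + 1)).flatMap fun j =>
        if i = j then []
        else [Formula.dia (.and (.var i) (.or (.var j) (Formula.dia (.var j))))]))

/-- `A` is an antichain w.r.t. `R`: distinct elements are `R`-incomparable. -/
def AntichainIn {W : Type*} (R : W → W → Prop) (A : Set W) : Prop :=
  ∀ u ∈ A, ∀ v ∈ A, u ≠ v → ¬ R u v ∧ ¬ R v u

section Aux

variable {F : Frame} {V : ℕ → F.World → Prop} {w : F.World} {a b : Formula}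

lemma sat_and : Sat F V w (Formula.and a b) ↔ Sat F V w a ∧ Sat F V w b := by
  simp only [Formula.and, Formula.neg, Sat]; tauto

lemma sat_or : Sat F V w (Formula.or a b) ↔ Sat F V w a ∨ Sat F V w b := by
  simp only [Formula.or, Formula.neg, Sat]; tauto

lemma sat_dia : Sat F V w (Formula.dia a) ↔ ∃ u, F.rel w u ∧ Sat F V u a := by
  simp only [Formula.dia, Formula.neg, Sat]
  constructor
  · intro h; by_contra h'; push_neg at h'; exact h fun u hu ha => h' u hu ha
  · rintro ⟨u, hu, ha⟩ h; exact h u hu ha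

lemma sat_bigConj {l : List Formula} :
    Sat F V w (Formula.bigConj l) ↔ ∀ φ ∈ l, Sat F V w φ := by
  induction l with
  | nil => simp [Formula.bigConj, Formula.top, Sat]
  | cons x xs ih =>
      show Sat F V w (Formula.and x (Formula.bigConj xs)) ↔ _
      rw [sat_and, ih]; simp

lemma sat_bigDisj {l : List Formula} :
    Sat F V w (Formula.bigDisj l) ↔ ∃ φ ∈ l, Sat F V w φ := by
  induction l with
  | nil => simp [Formula.bigDisj]; exact fun h => h
  | cons x xs ih =>
      show Sat F V w (Formula.or x (Formula.bigDisj xs)) ↔ _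
      rw [sat_or, ih]; simp

lemma mem_conj_list {n : ℕ} {φ : Formula} :
    φ ∈ ((List.finRange (n + 1)).map fun i =>
      Formula.dia (.and (.var i) (.box (Formula.neg (.var i))))) ↔
    ∃ i : Fin (n + 1),
      φ = Formula.dia (.and (.var i) (.box (Formula.neg (.var i)))) := by
  simp
  constructor
  · rintro ⟨i, h⟩; exact ⟨i, h.symm⟩
  · rintro ⟨i, rfl⟩; exact ⟨i, rfl⟩

lemma mem_disj_list {n : ℕ} {φ : Formula} :
    φ ∈ ((List.finRange (n + 1)).flatMap fun i =>
      (List.finRange (n + 1)).flatMap fun j =>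
        if i = j then []
        else [Formula.dia (.and (.var i) (.or (.var j) (Formula.dia (.var j))))]) ↔
    ∃ i j : Fin (n + 1), i ≠ j ∧
      φ = Formula.dia (.and (.var i) (.or (.var j) (Formula.dia (.var j)))) := by
  simp [Fin.val_inj]

end Aux

/-- Frame condition for `Wid_n^•`: it is valid at `w` iff every irreflexive
antichain in the subframe generated by `w` has at most `n` elements. -/
theorem widBul_frame_condition (n : ℕ) (hn : 1 ≤ n) (F : Frame)
    (htr : ∀ a b c, F.rel a b → F.rel b c → F.rel a c) (w : F.World) :
    SatAll F w (widBul n) ↔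
      ∀ A : Set F.World, A ⊆ {v | v = w ∨ F.rel w v} → AntichainIn F.rel A →
        (∀ a ∈ A, ¬ F.rel a a) → Cardinal.mk A ≤ (n : Cardinal) := by
  constructor
  · intro h A hA hanti hirr
    by_contra hcard
    have hle : ((n + 1 : ℕ) : Cardinal) ≤ Cardinal.mk A := by
      rw [Cardinal.nat_succ]
      exact Order.succ_le_of_lt (not_le.mp hcard)
    have hne : Nonempty (Fin (n + 1) ↪ A) := by
      rw [← Cardinal.mk_fin (n + 1)] at hle
      exact Cardinal.le_def _ _ |>.mp hle
    obtain ⟨f⟩ := hne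
    set a : Fin (n + 1) → F.World := fun i => (f i : F.World) with ha
    have hmem : ∀ i, a i ∈ A := fun i => (f i).2
    have hainj : Function.Injective a := fun i j hij => f.injective (Subtype.ext hij)
    have exists_ne : ∀ i : Fin (n + 1), ∃ j, j ≠ i := by
      intro i
      rcases eq_or_ne i ⟨0, by omega⟩ with hi | hi
      · exact ⟨⟨1, by omega⟩, by rw [hi]; simp [Fin.ext_iff]⟩
      · exact ⟨⟨0, by omega⟩, Ne.symm hi⟩
    have hRw : ∀ i, F.rel w (a i) := by
      intro i
      rcases hA (hmem i) with h0 | h0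
      · exfalso
        obtain ⟨j, hji⟩ := exists_ne i
        have hji' : a j ≠ a i := fun hEq => hji (hainj hEq)
        rcases hA (hmem j) with h1 | h1
        · exact hji' (h1.trans h0.symm)
        · rw [← h0] at h1
          exact (hanti _ (hmem i) _ (hmem j) (Ne.symm hji')).1 h1
      · exact h0
    set V : ℕ → F.World → Prop := fun k v => ∃ i : Fin (n + 1), (i : ℕ) = k ∧ v = a i with hV
    have hsat := h V
    rw [widBul] at hsat
    have hant : Sat F V w (Formula.bigConj ((List.finRange (n + 1)).map fun i =>
        Formula.dia (.and (.var i) (.box (Formula.neg (.var i)))))) := by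
      rw [sat_bigConj]
      intro φ hφ
      rw [mem_conj_list] at hφ
      obtain ⟨i, rfl⟩ := hφ
      rw [sat_dia]
      refine ⟨a i, hRw i, ?_⟩
      rw [sat_and]
      refine ⟨⟨i, rfl, rfl⟩, ?_⟩
      intro v hv hVv
      obtain ⟨i', hi', rfl⟩ := hVv
      have : i' = i := Fin.ext hi'
      subst this
      exact hirr _ (hmem i') hv
    have hcons := hsat hant
    rw [sat_bigDisj] at hcons
    obtain ⟨φ, hφ, hsφ⟩ := hcons
    rw [mem_disj_list] at hφ
    obtain ⟨i, j, hij, rfl⟩ := hφ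
    rw [sat_dia] at hsφ
    obtain ⟨u, hwu, hu⟩ := hsφ
    rw [sat_and] at hu
    obtain ⟨hVi, hor⟩ := hu
    obtain ⟨i', hi', rfl⟩ := hVi
    have : i' = i := Fin.ext hi'
    subst this
    rw [sat_or] at hor
    rcases hor with hor | hor
    · obtain ⟨j', hj', hEq⟩ := hor
      have : j' = j := Fin.ext hj'
      subst this
      exact hij (hainj hEq)
    · rw [sat_dia] at hor
      obtain ⟨v, hv, j', hj', rfl⟩ := hor
      have : j' = j := Fin.ext hj'
      subst this
      have hne' : a i' ≠ a j' := fun hEq => hij (hainj hEq)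
      exact (hanti _ (hmem i') _ (hmem j') hne').1 hv
  · intro hcard V
    rw [widBul]
    intro hant
    rw [sat_bigConj] at hant
    have hu : ∀ i : Fin (n + 1), ∃ u, F.rel w u ∧ V i u ∧ ∀ v, F.rel u v → ¬ V i v := by
      intro i
      have hm := hant _ (mem_conj_list.mpr ⟨i, rfl⟩)
      rw [sat_dia] at hm
      obtain ⟨u, hwu, hs⟩ := hm
      rw [sat_and] at hs
      exact ⟨u, hwu, hs.1, fun v hv hVv => hs.2 v hv hVv⟩
    choose u hwu hVu hbox using hu
    rw [sat_bigDisj]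
    by_contra hno
    push_neg at hno
    have key : ∀ i j : Fin (n + 1), i ≠ j → u i ≠ u j ∧ ¬ F.rel (u i) (u j) := by
      intro i j hij
      constructor
      · intro hEq
        apply hno (Formula.dia (.and (.var i) (.or (.var j) (Formula.dia (.var j)))))
          (mem_disj_list.mpr ⟨i, j, hij, rfl⟩)
        rw [sat_dia]
        exact ⟨u i, hwu i, sat_and.mpr ⟨hVu i, sat_or.mpr (Or.inl (hEq ▸ hVu j))⟩⟩
      · intro hR
        apply hno (Formula.dia (.and (.var i) (.or (.var j) (Formula.dia (.var j)))))
          (mem_disj_list.mpr ⟨i, j, hij, rfl⟩)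
        rw [sat_dia]
        exact ⟨u i, hwu i, sat_and.mpr
          ⟨hVu i, sat_or.mpr (Or.inr (sat_dia.mpr ⟨u j, hR, hVu j⟩))⟩⟩
    have hinj : Function.Injective u := by
      intro i j hEq
      by_contra hij
      exact (key i j hij).1 hEq
    have hA := hcard (Set.range u) ?_ ?_ ?_
    · rw [Cardinal.mk_range_eq _ hinj, Cardinal.mk_fin] at hA
      have := Nat.cast_le.mp hA
      omega
    · rintro x ⟨i, rfl⟩
      exact Or.inr (hwu i)
    · rintro x ⟨i, rfl⟩ y ⟨j, rfl⟩ hne'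
      have hij : i ≠ j := fun hEq => hne' (by rw [hEq])
      exact ⟨(key i j hij).2, (key j i hij.symm).2⟩
    · rintro x ⟨i, rfl⟩ hR
      exact hbox i (u i) hR (hVu i)
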